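/- Let W be a multiset of cyclic strings over {a,b}, x a string occurring in W, and let [i_y..j_y) denote the y-interval for y ∈ {x, ax, bx}. If the ax-interval is empty (n_{ax} = 0), then LCP[i_{bx}+1..j_{bx}) equals the array obtained from LCP[i_x+1..j_x) by adding 1 to every element. -/

import Mathlib

set_option linter.unusedSectionVars false

namespace SILA

variable {α : Type*} [LinearOrder α]

/-- Lexicographic order on infinite strings. -/
def lexLE (f g : ℕ → α) : Prop :=
  f = g ∨ ∃ k, (∀ m < k, f m = g m) ∧ f k < g k

/-- Length of longest common prefix of two infinite strings, in ℕ∞. -/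
noncomputable def lcpInf (f g : ℕ → α) : ℕ∞ :=
  sSup {m : ℕ∞ | ∀ k : ℕ, (k : ℕ∞) < m → f k = g k}

/-- A (nonempty) cyclic word. -/
structure CyclicWord (α : Type*) where
  word : List α
  ne : word ≠ []

def CyclicWord.len (w : CyclicWord α) : ℕ := w.word.length

lemma CyclicWord.len_pos (w : CyclicWord α) : 0 < w.len :=
  List.length_pos_iff.mpr w.ne

/-- Positions in a multiset (family) of cyclic words. -/
def Pos {s : ℕ} (W : Fin s → CyclicWord α) : Type _ :=
  (i : Fin s) × Fin (W i).len

instance {s : ℕ} (W : Fin s → CyclicWord α) : Fintype (Pos W) := by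
  unfold Pos; infer_instance

/-- The infinite cyclic suffix starting at a position. -/
def suffixAt {s : ℕ} (W : Fin s → CyclicWord α) (p : Pos W) : ℕ → α :=
  fun k => (W p.1).word.get ⟨(p.2.val + k) % (W p.1).len, Nat.mod_lt _ (W p.1).len_pos⟩

/-- `SA` is a cyclic suffix array of `W`: it enumerates all positions in
nondecreasing lexicographic order of their cyclic suffixes. -/
def IsCyclicSA {s n : ℕ} (W : Fin s → CyclicWord α) (SA : Fin n ≃ Pos W) : Prop :=
  ∀ r r' : Fin n, r ≤ r' → lexLE (suffixAt W (SA r)) (suffixAt W (SA r'))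

/-- The LCP array of a cyclic suffix array (meaningful on indices 1..n-1). -/
noncomputable def lcpArr {s n : ℕ} (W : Fin s → CyclicWord α) (SA : Fin n ≃ Pos W)
    (r : ℕ) : ℕ∞ :=
  if h : 0 < r ∧ r < n then
    lcpInf (suffixAt W (SA ⟨r - 1, by omega⟩)) (suffixAt W (SA ⟨r, h.2⟩))
  else 0

/-- The Burrows–Wheeler transform: character cyclically preceding the suffix of rank `r`. -/
def bwt {s n : ℕ} (W : Fin s → CyclicWord α) (SA : Fin n ≃ Pos W) (r : Fin n) : α :=
  (W (SA r).1).word.get ⟨((SA r).2.val + (W (SA r).1).len - 1) % (W (SA r).1).len,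
    Nat.mod_lt _ (W (SA r).1).len_pos⟩

/-- `x` is a (finite) prefix of the infinite string `f`. -/
def IsPrefix (x : List α) (f : ℕ → α) : Prop :=
  ∀ m : Fin x.length, f m.val = x.get m

/-- `[i..j)` is the x-interval: the ranks of exactly those suffixes with prefix `x`. -/
def IsXInterval {s n : ℕ} (W : Fin s → CyclicWord α) (SA : Fin n ≃ Pos W)
    (x : List α) (i j : ℕ) : Prop :=
  i ≤ j ∧ j ≤ n ∧ ∀ r : Fin n, IsPrefix x (suffixAt W (SA r)) ↔ (i ≤ r.val ∧ r.val < j)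

/-- `[i..j)` is an ℓ-interval of the LCP array `L` (of length `n`, indices 1..n-1). -/
def IsLInterval (L : ℕ → ℕ∞) (n : ℕ) (ℓ : ℕ∞) (i j : ℕ) : Prop :=
  i < j ∧ j ≤ n ∧
  (i = 0 ∨ L i < ℓ) ∧
  (∀ r, i < r → r < j → ℓ ≤ L r) ∧
  ((i + 1 = j ∧ ℓ = ⊤) ∨ ∃ r, i < r ∧ r < j ∧ L r = ℓ) ∧
  (j = n ∨ L j < ℓ)


set_option maxHeartbeats 1000000

/- ====== AUX ====== -/

lemma lexLE_trans {f g h : ℕ → α} (h1 : lexLE f g) (h2 : lexLE g h) : lexLE f h := by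
  rcases h1 with rfl | ⟨k1, hk1, hlt1⟩
  · exact h2
  rcases h2 with rfl | ⟨k2, hk2, hlt2⟩
  · exact Or.inr ⟨k1, hk1, hlt1⟩
  rcases lt_trichotomy k1 k2 with h | rfl | h
  · exact Or.inr ⟨k1, fun m hm => (hk1 m hm).trans (hk2 m (hm.trans h)),
      hlt1.trans_eq (hk2 k1 h)⟩
  · exact Or.inr ⟨k1, fun m hm => (hk1 m hm).trans (hk2 m hm), hlt1.trans hlt2⟩
  · exact Or.inr ⟨k2, fun m hm => (hk1 m (hm.trans h)).trans (hk2 m hm),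
      lt_of_le_of_lt (le_of_eq (hk1 k2 h)) hlt2⟩

lemma lexLE_antisymm {f g : ℕ → α} (h1 : lexLE f g) (h2 : lexLE g f) : f = g := by
  rcases h1 with rfl | ⟨k1, hk1, hlt1⟩
  · rfl
  rcases h2 with rfl | ⟨k2, hk2, hlt2⟩
  · rfl
  rcases lt_trichotomy k1 k2 with h | rfl | h
  · exact absurd (hk2 k1 h) hlt1.ne'
  · exact absurd (hlt1.trans hlt2) (lt_irrefl _)
  · exact absurd (hk1 k2 h) hlt2.ne'

def consS (c : α) (f : ℕ → α) : ℕ → α :=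
  fun k => Nat.rec c (fun k' _ => f k') k

@[simp] lemma consS_zero (c : α) (f : ℕ → α) : consS c f 0 = c := rfl
@[simp] lemma consS_succ (c : α) (f : ℕ → α) (k : ℕ) : consS c f (k + 1) = f k := rfl

lemma lexLE_consS {c : α} {f g : ℕ → α} (h : lexLE f g) : lexLE (consS c f) (consS c g) := by
  rcases h with rfl | ⟨k, hk, hlt⟩
  · exact Or.inl rfl
  · refine Or.inr ⟨k + 1, ?_, by simpa using hlt⟩
    intro m hm
    cases m with
    | zero => rfl
    | succ m' => simpa using hk m' (by omega)

lemma lcpInf_self (f : ℕ → α) : lcpInf f f = ⊤ := by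
  have : {m : ℕ∞ | ∀ k : ℕ, (k : ℕ∞) < m → f k = f k} = Set.univ := by
    ext m; simp
  rw [lcpInf, this, sSup_univ]

lemma lcpInf_eq_find {f g : ℕ → α} (h : ∃ k, f k ≠ g k) :
    lcpInf f g = (Nat.find h : ℕ∞) := by
  apply le_antisymm
  · apply sSup_le
    intro m hm
    by_contra hc
    push_neg at hc
    exact Nat.find_spec h (hm _ hc)
  · apply le_sSup
    intro k hk
    rw [Nat.cast_lt] at hk
    by_contra hne
    exact Nat.find_min h hk hne

lemma lcpInf_consS (c : α) (f g : ℕ → α) :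
    lcpInf (consS c f) (consS c g) = 1 + lcpInf f g := by
  by_cases hfg : f = g
  · subst hfg
    rw [lcpInf_self, lcpInf_self]
    rfl
  · have h : ∃ k, f k ≠ g k := by
      by_contra hc
      push_neg at hc
      exact hfg (funext hc)
    have h' : ∃ k, consS c f k ≠ consS c g k := ⟨Nat.find h + 1, by simpa using Nat.find_spec h⟩
    rw [lcpInf_eq_find h, lcpInf_eq_find h']
    have : Nat.find h' = Nat.find h + 1 := by
      apply le_antisymm
      · exact Nat.find_le (by simpa using Nat.find_spec h)
      · by_contra hc
        push_neg at hc
        have h2 := Nat.find_spec h'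
        cases hN' : Nat.find h' with
        | zero => rw [hN'] at h2; exact h2 rfl
        | succ k =>
          rw [hN'] at h2 hc
          have : f k ≠ g k := by simpa using h2
          have := Nat.find_min' h this
          omega
    rw [this]
    push_cast
    ring

lemma exists_le_of_inj {m : ℕ} (σ : Fin m → Fin m) (hσ : Function.Injective σ)
    (t : Fin m) : ∃ s, s ≤ t ∧ t ≤ σ s := by
  by_contra hc
  push_neg at hc
  have hmaps : ∀ s ∈ Finset.Iic t, σ s ∈ Finset.Iio t := by
    intro s hs
    exact Finset.mem_Iio.mpr (hc s (Finset.mem_Iic.mp hs))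
  have hcard := Finset.card_le_card_of_injOn σ hmaps (hσ.injOn)
  rw [Fin.card_Iic, Fin.card_Iio] at hcard
  omega

lemma sorted_match_le {m : ℕ} (u v : Fin m → (ℕ → α)) (σ : Fin m → Fin m)
    (hσ : Function.Injective σ)
    (hu : ∀ s t, s ≤ t → lexLE (u s) (u t)) (hv : ∀ s t, s ≤ t → lexLE (v s) (v t))
    (h : ∀ t, u (σ t) = v t) : ∀ t, lexLE (u t) (v t) := by
  intro t
  obtain ⟨s, hst, hts⟩ := exists_le_of_inj σ hσ t
  exact lexLE_trans ((h s) ▸ hu t (σ s) hts) (hv s t hst)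

lemma sorted_match {m : ℕ} (u v : Fin m → (ℕ → α)) (e : Fin m ≃ Fin m)
    (hu : ∀ s t, s ≤ t → lexLE (u s) (u t)) (hv : ∀ s t, s ≤ t → lexLE (v s) (v t))
    (h : ∀ t, u (e t) = v t) : ∀ t, u t = v t := by
  intro t
  refine lexLE_antisymm (sorted_match_le u v e e.injective hu hv h t)
    (sorted_match_le v u e.symm e.symm.injective hv hu ?_ t)
  intro r
  rw [← h (e.symm r), Equiv.apply_symm_apply]

/- ====== position shift ====== -/

def prevEquiv {s : ℕ} (W : Fin s → CyclicWord α) : Pos W ≃ Pos W where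
  toFun p := ⟨p.1, ⟨(p.2.val + (W p.1).len - 1) % (W p.1).len, Nat.mod_lt _ (W p.1).len_pos⟩⟩
  invFun p := ⟨p.1, ⟨(p.2.val + 1) % (W p.1).len, Nat.mod_lt _ (W p.1).len_pos⟩⟩
  left_inv p := by
    rcases p with ⟨i, v, hv⟩
    have hL : 0 < (W i).len := (W i).len_pos
    simp only
    congr 1
    apply Fin.ext
    simp only
    rw [Nat.mod_add_mod, show v + (W i).len - 1 + 1 = v + (W i).len from by omega,
      Nat.add_mod_right, Nat.mod_eq_of_lt hv]
  right_inv p := by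
    rcases p with ⟨i, v, hv⟩
    have hL : 0 < (W i).len := (W i).len_pos
    simp only
    congr 1
    apply Fin.ext
    simp only
    rw [show (v + 1) % (W i).len + (W i).len - 1 = (v + 1) % (W i).len + ((W i).len - 1) from by omega,
      Nat.mod_add_mod, show v + 1 + ((W i).len - 1) = v + (W i).len from by omega,
      Nat.add_mod_right, Nat.mod_eq_of_lt hv]

lemma suffixAt_prev_succ {s : ℕ} (W : Fin s → CyclicWord α) (p : Pos W) (k : ℕ) :
    suffixAt W (prevEquiv W p) (k + 1) = suffixAt W p k := by
  rcases p with ⟨i, v, hv⟩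
  have hL : 0 < (W i).len := (W i).len_pos
  show (W i).word.get _ = (W i).word.get _
  congr 1
  apply Fin.ext
  show ((v + (W i).len - 1) % (W i).len + (k+1)) % (W i).len = (v + k) % (W i).len
  rw [Nat.mod_add_mod, show v + (W i).len - 1 + (k+1) = (v + k) + (W i).len from by omega,
    Nat.add_mod_right]

lemma suffixAt_prev_eq {s : ℕ} (W : Fin s → CyclicWord α) (p : Pos W) :
    suffixAt W (prevEquiv W p) = consS (suffixAt W (prevEquiv W p) 0) (suffixAt W p) := by
  funext k
  cases k with
  | zero => rfl
  | succ k' => rw [consS_succ, suffixAt_prev_succ]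


/-- (Binary alphabet, `a = false < b = true`.) If `x` occurs in `W`
and the ax-interval is empty, then the LCP array on the bx-interval equals the LCP
array on the x-interval with 1 added to every element. -/
theorem lcp_match_when_ax_empty {s n : ℕ}
    (W : Fin s → CyclicWord Bool) (SA : Fin n ≃ Pos W) (hSA : IsCyclicSA W SA)
    (x : List Bool) (ix jx iax jax ibx jbx : ℕ)
    (hocc : ∃ p : Pos W, IsPrefix x (suffixAt W p))
    (hx : IsXInterval W SA x ix jx)
    (hax : IsXInterval W SA (false :: x) iax jax)
    (hbx : IsXInterval W SA (true :: x) ibx jbx)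
    (hempty : iax = jax) :
    jbx - ibx = jx - ix ∧
    ∀ t : ℕ, 0 < t → t < jbx - ibx →
      lcpArr W SA (ibx + t) = 1 + lcpArr W SA (ix + t) := by
  obtain ⟨hx1, hx2, hx3⟩ := hx
  obtain ⟨hax1, hax2, hax3⟩ := hax
  obtain ⟨hbx1, hbx2, hbx3⟩ := hbx
  clear hocc
  -- Step A: forward map
  have stepA : ∀ r : Fin n, ix ≤ r.val → r.val < jx →
      (ibx ≤ (SA.symm (prevEquiv W (SA r))).val ∧ (SA.symm (prevEquiv W (SA r))).val < jbx) ∧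
      suffixAt W (prevEquiv W (SA r)) = consS true (suffixAt W (SA r)) := by
    intro r h1 h2
    have hpre : IsPrefix x (suffixAt W (SA r)) := (hx3 r).mpr ⟨h1, h2⟩
    set q := prevEquiv W (SA r) with hq
    have hcons : suffixAt W q = consS (suffixAt W q 0) (suffixAt W (SA r)) :=
      suffixAt_prev_eq W (SA r)
    have hpre' : ∀ c : Bool, suffixAt W q 0 = c → IsPrefix (c :: x) (suffixAt W q) := by
      intro c hc mm
      rcases mm with ⟨mv, hm⟩
      cases mv with
      | zero => exact hc
      | succ k =>
        have hk : k < x.length := by simpa using hm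
        have h5 : suffixAt W q (k+1) = suffixAt W (SA r) k := suffixAt_prev_succ W (SA r) k
        have h6 := hpre ⟨k, hk⟩
        simp only [List.get_cons_succ]
        rw [h5]
        exact h6
    have hct : suffixAt W q 0 = true := by
      by_contra hcf
      have hcfalse : suffixAt W q 0 = false := by
        cases hqv : suffixAt W q 0
        · rfl
        · exact absurd hqv hcf
      have hrank := (hax3 (SA.symm q)).mp (by
        rw [Equiv.apply_symm_apply]; exact hpre' false hcfalse)
      omega
    refine ⟨(hbx3 (SA.symm q)).mp (by
      rw [Equiv.apply_symm_apply]; exact hpre' true hct), ?_⟩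
    rw [hcons, hct]
  -- Step B: backward map
  have stepB : ∀ r : Fin n, ibx ≤ r.val → r.val < jbx →
      ix ≤ (SA.symm ((prevEquiv W).symm (SA r))).val ∧
      (SA.symm ((prevEquiv W).symm (SA r))).val < jx := by
    intro r h1 h2
    have hpre : IsPrefix (true :: x) (suffixAt W (SA r)) := (hbx3 r).mpr ⟨h1, h2⟩
    set q := (prevEquiv W).symm (SA r) with hq
    have hkey : ∀ k, suffixAt W (SA r) (k+1) = suffixAt W q k := by
      intro k
      have h7 := suffixAt_prev_succ W q k
      rwa [hq, Equiv.apply_symm_apply] at h7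
    have hpx : IsPrefix x (suffixAt W q) := by
      intro mm
      rcases mm with ⟨mv, hm⟩
      rw [← hkey mv]
      have h8 := hpre ⟨mv+1, by simpa using Nat.succ_lt_succ hm⟩
      rw [h8]
      simp
    have := (hx3 (SA.symm q)).mp (by rw [Equiv.apply_symm_apply]; exact hpx)
    exact this
  -- Step C: cardinality
  have hcard : jbx - ibx = jx - ix := by
    have hSx : (Finset.univ.filter (fun r : Fin n => ix ≤ r.val ∧ r.val < jx)).card = jx - ix := by
      rw [← Nat.card_Ico ix jx]
      refine Finset.card_bij' (fun (r : Fin n) _ => r.val)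
        (fun v hv => (⟨v, lt_of_lt_of_le (Finset.mem_Ico.mp hv).2 hx2⟩ : Fin n)) ?_ ?_ ?_ ?_
      · intro r hr
        simp only [Finset.mem_filter, Finset.mem_univ, true_and] at hr
        exact Finset.mem_Ico.mpr hr
      · intro v hv
        simp only [Finset.mem_filter, Finset.mem_univ, true_and]
        exact ⟨(Finset.mem_Ico.mp hv).1, (Finset.mem_Ico.mp hv).2⟩
      · intro r hr; rfl
      · intro v hv; rfl
    have hSb : (Finset.univ.filter (fun r : Fin n => ibx ≤ r.val ∧ r.val < jbx)).card
        = jbx - ibx := by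
      rw [← Nat.card_Ico ibx jbx]
      refine Finset.card_bij' (fun (r : Fin n) _ => r.val)
        (fun v hv => (⟨v, lt_of_lt_of_le (Finset.mem_Ico.mp hv).2 hbx2⟩ : Fin n)) ?_ ?_ ?_ ?_
      · intro r hr
        simp only [Finset.mem_filter, Finset.mem_univ, true_and] at hr
        exact Finset.mem_Ico.mpr hr
      · intro v hv
        simp only [Finset.mem_filter, Finset.mem_univ, true_and]
        exact ⟨(Finset.mem_Ico.mp hv).1, (Finset.mem_Ico.mp hv).2⟩
      · intro r hr; rfl
      · intro v hv; rfl
    have heq : (Finset.univ.filter (fun r : Fin n => ix ≤ r.val ∧ r.val < jx)).card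
        = (Finset.univ.filter (fun r : Fin n => ibx ≤ r.val ∧ r.val < jbx)).card := by
      refine Finset.card_bij' (fun (r : Fin n) _ => SA.symm (prevEquiv W (SA r)))
        (fun (r : Fin n) _ => SA.symm ((prevEquiv W).symm (SA r))) ?_ ?_ ?_ ?_
      · intro r hr
        simp only [Finset.mem_filter, Finset.mem_univ, true_and] at hr ⊢
        exact (stepA r hr.1 hr.2).1
      · intro r hr
        simp only [Finset.mem_filter, Finset.mem_univ, true_and] at hr ⊢
        exact stepB r hr.1 hr.2
      · intro r hr
        simp
      · intro r hr
        simp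
    omega
  refine ⟨hcard, ?_⟩
  set m := jx - ix with hm
  have hm_n : ∀ u, u < m → ix + u < n := by intro u hu; omega
  have hb_n : ∀ u, u < m → ibx + u < n := by intro u hu; omega
  -- Step D: matching of suffixes
  have hmatch : ∀ (u : ℕ) (hu : u < m),
      suffixAt W (SA ⟨ibx + u, hb_n u hu⟩) = consS true (suffixAt W (SA ⟨ix + u, hm_n u hu⟩)) := by
    have key : ∀ tt : Fin m,
        (fun t : Fin m => suffixAt W (SA ⟨ibx + t.val, hb_n t.val t.isLt⟩)) tt
        = (fun t : Fin m => consS true (suffixAt W (SA ⟨ix + t.val, hm_n t.val t.isLt⟩))) tt := by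
      have hA : ∀ t : Fin m,
          (ibx ≤ (SA.symm (prevEquiv W (SA ⟨ix + t.val, hm_n t.val t.isLt⟩))).val ∧
           (SA.symm (prevEquiv W (SA ⟨ix + t.val, hm_n t.val t.isLt⟩))).val < jbx) ∧
          suffixAt W (prevEquiv W (SA ⟨ix + t.val, hm_n t.val t.isLt⟩))
            = consS true (suffixAt W (SA ⟨ix + t.val, hm_n t.val t.isLt⟩)) := by
        intro t
        exact stepA _ (Nat.le_add_right _ _) (by have := t.isLt; simp; omega)
      have hσlt : ∀ t : Fin m,
          (SA.symm (prevEquiv W (SA ⟨ix + t.val, hm_n t.val t.isLt⟩))).val - ibx < m := by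
        intro t
        have := (hA t).1
        omega
      set σ : Fin m → Fin m := fun t =>
        ⟨(SA.symm (prevEquiv W (SA ⟨ix + t.val, hm_n t.val t.isLt⟩))).val - ibx, hσlt t⟩
        with hσdef
      have hσeq : ∀ t : Fin m, (⟨ibx + (σ t).val, hb_n (σ t).val (σ t).isLt⟩ : Fin n)
          = SA.symm (prevEquiv W (SA ⟨ix + t.val, hm_n t.val t.isLt⟩)) := by
        intro t
        apply Fin.ext
        have := (hA t).1.1
        simp [hσdef]
        omega
      have huv : ∀ t : Fin m,
          suffixAt W (SA ⟨ibx + (σ t).val, hb_n (σ t).val (σ t).isLt⟩)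
          = consS true (suffixAt W (SA ⟨ix + t.val, hm_n t.val t.isLt⟩)) := by
        intro t
        rw [hσeq t, Equiv.apply_symm_apply]
        exact (hA t).2
      have hσinj : Function.Injective σ := by
        intro a b hab
        have h1 : (⟨ibx + (σ a).val, hb_n (σ a).val (σ a).isLt⟩ : Fin n)
            = ⟨ibx + (σ b).val, hb_n (σ b).val (σ b).isLt⟩ := by
          apply Fin.ext; rw [hab]
        rw [hσeq a, hσeq b] at h1
        have h2 : (⟨ix + a.val, hm_n a.val a.isLt⟩ : Fin n) = ⟨ix + b.val, hm_n b.val b.isLt⟩ :=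
          SA.injective ((prevEquiv W).injective (SA.symm.injective h1))
        have h3 := congrArg Fin.val h2
        simp at h3
        exact Fin.ext h3
      have hσbij := Finite.injective_iff_bijective.mp hσinj
      apply sorted_match _ _ (Equiv.ofBijective σ hσbij)
      · intro a b hab
        apply hSA
        simp only [Fin.mk_le_mk]
        have := Fin.le_def.mp hab
        omega
      · intro a b hab
        apply lexLE_consS
        apply hSA
        simp only [Fin.mk_le_mk]
        have := Fin.le_def.mp hab
        omega
      · intro t
        exact huv t
    intro u hu
    exact key ⟨u, hu⟩
  intro t ht0 htm
  have htm' : t < m := by omega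
  have htm1 : t - 1 < m := by omega
  have hbpos : 0 < ibx + t ∧ ibx + t < n := ⟨by omega, hb_n t htm'⟩
  have hxpos : 0 < ix + t ∧ ix + t < n := ⟨by omega, hm_n t htm'⟩
  rw [lcpArr, lcpArr, dif_pos hbpos, dif_pos hxpos]
  have e1 : (⟨ibx + t - 1, by omega⟩ : Fin n) = ⟨ibx + (t - 1), hb_n _ htm1⟩ := by
    apply Fin.ext; simp; omega
  have e2 : (⟨ibx + t, hbpos.2⟩ : Fin n) = ⟨ibx + t, hb_n _ htm'⟩ := rfl
  have e3 : (⟨ix + t - 1, by omega⟩ : Fin n) = ⟨ix + (t - 1), hm_n _ htm1⟩ := by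
    apply Fin.ext; simp; omega
  have e4 : (⟨ix + t, hxpos.2⟩ : Fin n) = ⟨ix + t, hm_n _ htm'⟩ := rfl
  rw [e1, e2, e3, e4, hmatch (t-1) htm1, hmatch t htm', lcpInf_consS]


end SILA
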